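/- Let n ≥ 2 and 1 ≤ p < n, and define 𝒫_p^{largest} = {A ∈ Sym²(ℝⁿ) : A + ((p−1)/(n−p))·tr(A)·I ≥ 0}. Then: (i) 𝒫_p^{largest} is a closed convex cone subequation, invariant under the O(n)-action A ↦ gᵀAg, with Riesz characteristic p (i.e. P_{e⊥} − (p−1)P_e ∈ ∂𝒫_p^{largest} for every unit vector e); and (ii) every O(n)-invariant convex cone subequation F ⊆ Sym²(ℝⁿ) with Riesz characteristic p satisfies F ⊆ 𝒫_p^{largest}. -/

import Mathlib

open Set Filter Topology Matrix

noncomputable section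

abbrev EucSp (n : ℕ) := EuclideanSpace ℝ (Fin n)

/-- The rank-one orthogonal projection matrix `P_e = e eᵀ` associated to a vector `e`. -/
def projMat {n : ℕ} (e : EucSp n) : Matrix (Fin n) (Fin n) ℝ :=
  Matrix.of fun i j => e i * e j

/-- A (pure second-order, constant coefficient) subequation: a closed set of symmetric
matrices satisfying positivity `F + 𝒫 ⊆ F`. -/
def IsSubequation {n : ℕ} (F : Set (Matrix (Fin n) (Fin n) ℝ)) : Prop :=
  (∀ A ∈ F, A.IsSymm) ∧ IsClosed F ∧
    ∀ A ∈ F, ∀ P : Matrix (Fin n) (Fin n) ℝ, P.PosSemidef → A + P ∈ F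

/-- A cone subequation. -/
def IsConeSubequation {n : ℕ} (F : Set (Matrix (Fin n) (Fin n) ℝ)) : Prop :=
  IsSubequation F ∧ ∀ A ∈ F, ∀ t : ℝ, 0 ≤ t → t • A ∈ F

/-- `F` is invariant under a closed subgroup of `O(n)` acting transitively on the
unit sphere. -/
def STInvariant {n : ℕ} (F : Set (Matrix (Fin n) (Fin n) ℝ)) : Prop :=
  ∃ G : Set (Matrix (Fin n) (Fin n) ℝ),
    IsClosed G ∧
    G ⊆ (Matrix.orthogonalGroup (Fin n) ℝ : Set (Matrix (Fin n) (Fin n) ℝ)) ∧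
    (1 : Matrix (Fin n) (Fin n) ℝ) ∈ G ∧
    (∀ g ∈ G, ∀ h ∈ G, g * h ∈ G) ∧
    (∀ g ∈ G, g⁻¹ ∈ G) ∧
    (∀ x y : EucSp n, ‖x‖ = 1 → ‖y‖ = 1 → ∃ g ∈ G, Matrix.toEuclideanLin g x = y) ∧
    (∀ g ∈ G, ∀ A ∈ F, gᵀ * A * g ∈ F)

/-- The interior of `F` relative to the subspace `Sym²(ℝⁿ)` of symmetric matrices. -/
def symInterior {n : ℕ} (F : Set (Matrix (Fin n) (Fin n) ℝ)) :
    Set (Matrix (Fin n) (Fin n) ℝ) :=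
  {A | ∃ U ∈ 𝓝 A, ∀ B ∈ U, B.IsSymm → B ∈ F}

/-- The frontier of `F` relative to the subspace `Sym²(ℝⁿ)` of symmetric matrices. -/
def symFrontier {n : ℕ} (F : Set (Matrix (Fin n) (Fin n) ℝ)) :
    Set (Matrix (Fin n) (Fin n) ℝ) :=
  closure F \ symInterior F

/-- `F` has finite (increasing) Riesz characteristic `p`:
`P_{e⊥} − (p−1) P_e ∈ ∂F` for every unit vector `e`. -/
def HasRieszChar {n : ℕ} (F : Set (Matrix (Fin n) (Fin n) ℝ)) (p : ℝ) : Prop :=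
  1 ≤ p ∧ ∀ e : EucSp n, ‖e‖ = 1 →
    ((1 : Matrix (Fin n) (Fin n) ℝ) - projMat e) - (p - 1) • projMat e ∈ symFrontier F

/-- `F` has finite decreasing Riesz characteristic `q`:
`−P_{e⊥} + (q−1) P_e ∈ ∂F` for every unit vector `e`. -/
def HasDualRieszChar {n : ℕ} (F : Set (Matrix (Fin n) (Fin n) ℝ)) (q : ℝ) : Prop :=
  1 ≤ q ∧ ∀ e : EucSp n, ‖e‖ = 1 →
    -((1 : Matrix (Fin n) (Fin n) ℝ) - projMat e) + (q - 1) • projMat e ∈ symFrontier F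

/-- The Hessian matrix of a function `φ : ℝⁿ → ℝ` at `x`. -/
def hess {n : ℕ} (φ : EucSp n → ℝ) (x : EucSp n) : Matrix (Fin n) (Fin n) ℝ :=
  Matrix.of fun i j =>
    iteratedFDeriv ℝ 2 φ x ![EuclideanSpace.single i (1 : ℝ), EuclideanSpace.single j (1 : ℝ)]

/-- `u` is `F`-subharmonic (a viscosity subsolution) on `X`. -/
def IsFSubharmonicOn {n : ℕ} (F : Set (Matrix (Fin n) (Fin n) ℝ))
    (X : Set (EucSp n)) (u : EucSp n → EReal) : Prop :=
  UpperSemicontinuousOn u X ∧ (∀ x ∈ X, u x < ⊤) ∧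
    ∀ x₀ ∈ X, ∀ φ : EucSp n → ℝ, ContDiffAt ℝ 2 φ x₀ →
      (∀ᶠ x in 𝓝[X] x₀, u x ≤ ((φ x : ℝ) : EReal)) → u x₀ = ((φ x₀ : ℝ) : EReal) →
      hess φ x₀ ∈ F

/-- The dual subequation `F̃ = {A : −A ∉ Int F}` (interior relative to `Sym²(ℝⁿ)`). -/
def dualSubeq {n : ℕ} (F : Set (Matrix (Fin n) (Fin n) ℝ)) :
    Set (Matrix (Fin n) (Fin n) ℝ) :=
  {A | A.IsSymm ∧ -A ∉ symInterior F}

/-- `u` is `F`-harmonic on `X`: `u` is `F`-subharmonic and `−u` is `F̃`-subharmonic. -/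
def IsFHarmonicOn {n : ℕ} (F : Set (Matrix (Fin n) (Fin n) ℝ))
    (X : Set (EucSp n)) (u : EucSp n → ℝ) : Prop :=
  IsFSubharmonicOn F X (fun x => ((u x : ℝ) : EReal)) ∧
  IsFSubharmonicOn (dualSubeq F) X (fun x => ((-(u x) : ℝ) : EReal))

/-- The Riesz kernel `K_p`. -/
def rieszKernel (p t : ℝ) : ℝ :=
  if p < 2 then t ^ (2 - p) else if p = 2 then Real.log t else -(t ^ (2 - p))

/-- `𝒫_p^{largest} = {A : A + ((p−1)/(n−p))·tr(A)·I ≥ 0}`. -/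
def Plargest (n : ℕ) (p : ℝ) : Set (Matrix (Fin n) (Fin n) ℝ) :=
  {A | A.IsSymm ∧
    (A + (((p - 1) / ((n : ℝ) - p)) * A.trace) • (1 : Matrix (Fin n) (Fin n) ℝ)).PosSemidef}

section AuxLemmas
variable {n : ℕ}

lemma isHermitian_iff_isSymm {M : Matrix (Fin n) (Fin n) ℝ} : M.IsHermitian ↔ M.IsSymm := by
  rw [Matrix.IsHermitian, Matrix.IsSymm, Matrix.conjTranspose_eq_transpose_of_trivial]

lemma posSemidef_iff_real {M : Matrix (Fin n) (Fin n) ℝ} (h : M.IsSymm) :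
    M.PosSemidef ↔ ∀ x : Fin n → ℝ, 0 ≤ dotProduct x (M *ᵥ x) := by
  constructor
  · intro hM x; simpa using hM.dotProduct_mulVec_nonneg x
  · intro hx; exact Matrix.PosSemidef.of_dotProduct_mulVec_nonneg (_root_.isHermitian_iff_isSymm.mpr h) fun x => by simpa using hx x

lemma quad_add (A B : Matrix (Fin n) (Fin n) ℝ) (x : Fin n → ℝ) :
    dotProduct x ((A + B) *ᵥ x)
      = dotProduct x (A *ᵥ x) + dotProduct x (B *ᵥ x) := by
  rw [Matrix.add_mulVec, dotProduct_add]

lemma quad_sub (A B : Matrix (Fin n) (Fin n) ℝ) (x : Fin n → ℝ) :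
    dotProduct x ((A - B) *ᵥ x)
      = dotProduct x (A *ᵥ x) - dotProduct x (B *ᵥ x) := by
  rw [Matrix.sub_mulVec, dotProduct_sub]

lemma quad_smul (c : ℝ) (A : Matrix (Fin n) (Fin n) ℝ) (x : Fin n → ℝ) :
    dotProduct x ((c • A) *ᵥ x) = c * dotProduct x (A *ᵥ x) := by
  rw [Matrix.smul_mulVec, dotProduct_smul, smul_eq_mul]

lemma quad_one (x : Fin n → ℝ) :
    dotProduct x ((1 : Matrix (Fin n) (Fin n) ℝ) *ᵥ x) = ∑ i, x i ^ 2 := by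
  rw [Matrix.one_mulVec]; simp [dotProduct, sq]

lemma quad_proj (e : EucSp n) (x : Fin n → ℝ) :
    dotProduct x (projMat e *ᵥ x) = (∑ i, e i * x i) ^ 2 := by
  simp only [dotProduct, Matrix.mulVec, projMat, Matrix.of_apply]
  rw [sq, Finset.sum_mul_sum]
  refine Finset.sum_congr rfl fun i _ => ?_
  simp only [dotProduct, Finset.mul_sum]
  exact Finset.sum_congr rfl fun j _ => by ring

lemma sum_sq_eq_one {e : EucSp n} (he : ‖e‖ = 1) : ∑ i, e i ^ 2 = 1 := by
  have h := congrArg (· ^ 2) he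
  simp only [EuclideanSpace.norm_eq] at h
  rw [Real.sq_sqrt (by positivity), one_pow] at h
  simpa [Real.norm_eq_abs, sq_abs] using h

lemma isSymm_proj (e : EucSp n) : (projMat e).IsSymm := by
  ext i j; simp [projMat, Matrix.transpose_apply, mul_comm]

lemma trace_proj {e : EucSp n} (he : ‖e‖ = 1) : (projMat e).trace = 1 := by
  simp only [Matrix.trace, Matrix.diag, projMat, Matrix.of_apply]
  simpa [sq] using sum_sq_eq_one he

lemma psd_smul {t : ℝ} (ht : 0 ≤ t) {M : Matrix (Fin n) (Fin n) ℝ} (hM : M.PosSemidef) :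
    (t • M).PosSemidef := by
  have hs : (t • M).IsSymm := by
    have := _root_.isHermitian_iff_isSymm.mp hM.1
    rw [Matrix.IsSymm, Matrix.transpose_smul, this.eq]
  rw [posSemidef_iff_real hs]
  intro x
  rw [quad_smul]
  exact mul_nonneg ht (by simpa using hM.dotProduct_mulVec_nonneg x)

lemma psd_trace_nonneg {M : Matrix (Fin n) (Fin n) ℝ} (hM : M.PosSemidef) : 0 ≤ M.trace := by
  refine Finset.sum_nonneg fun i _ => ?_
  have := hM.dotProduct_mulVec_nonneg (Pi.single i 1)
  simpa [dotProduct, Matrix.mulVec, Pi.single_apply] using this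

lemma psd_one : (1 : Matrix (Fin n) (Fin n) ℝ).PosSemidef := by
  rw [posSemidef_iff_real Matrix.isSymm_one]
  intro x; rw [quad_one]; positivity

lemma psd_proj (e : EucSp n) : (projMat e).PosSemidef := by
  rw [posSemidef_iff_real (isSymm_proj e)]
  intro x; rw [quad_proj]; positivity

lemma psd_one_sub_proj {e : EucSp n} (he : ‖e‖ = 1) :
    ((1 : Matrix (Fin n) (Fin n) ℝ) - projMat e).PosSemidef := by
  have hs : ((1 : Matrix (Fin n) (Fin n) ℝ) - projMat e).IsSymm := by
    rw [Matrix.IsSymm, Matrix.transpose_sub, Matrix.transpose_one, (isSymm_proj e).eq]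
  rw [posSemidef_iff_real hs]
  intro x
  rw [quad_sub, quad_one, quad_proj]
  have := Finset.sum_mul_sq_le_sq_mul_sq Finset.univ (fun i => e i) (fun i => x i)
  rw [sum_sq_eq_one he, one_mul] at this
  linarith

lemma dotProduct_expand (M : Matrix (Fin n) (Fin n) ℝ) (x : Fin n → ℝ) :
    dotProduct x (M *ᵥ x) = ∑ i, ∑ j, x i * M i j * x j := by
  simp [dotProduct, Matrix.mulVec, Finset.mul_sum, mul_assoc]

lemma continuous_entry (i j : Fin n) :
    Continuous fun M : Matrix (Fin n) (Fin n) ℝ => M i j :=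
  (continuous_apply j).comp (continuous_apply i)

lemma continuous_quad (x : Fin n → ℝ) :
    Continuous fun M : Matrix (Fin n) (Fin n) ℝ => dotProduct x (M *ᵥ x) := by
  simp only [dotProduct_expand]
  refine continuous_finset_sum _ fun i _ => continuous_finset_sum _ fun j _ => ?_
  exact (continuous_const.mul (continuous_entry i j)).mul continuous_const

lemma continuous_trace' : Continuous fun M : Matrix (Fin n) (Fin n) ℝ => M.trace :=
  continuous_finset_sum _ fun i _ => continuous_entry i i

lemma continuous_transpose' : Continuous fun M : Matrix (Fin n) (Fin n) ℝ => Mᵀ :=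
  continuous_pi fun i => continuous_pi fun j => continuous_entry j i

-- new part
lemma isSymm_shift {A : Matrix (Fin n) (Fin n) ℝ} (h : A.IsSymm) (s : ℝ) :
    (A + s • (1 : Matrix (Fin n) (Fin n) ℝ)).IsSymm := by
  rw [Matrix.IsSymm, Matrix.transpose_add, Matrix.transpose_smul, Matrix.transpose_one, h.eq]

lemma plargest_closed (p : ℝ) : IsClosed (Plargest n p) := by
  have hset : Plargest n p = {A : Matrix (Fin n) (Fin n) ℝ | Aᵀ = A} ∩
      ⋂ x : Fin n → ℝ, {A | 0 ≤ dotProduct x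
        ((A + (((p - 1) / ((n : ℝ) - p)) * A.trace) • (1 : Matrix (Fin n) (Fin n) ℝ)) *ᵥ x)} := by
    ext A
    constructor
    · rintro ⟨h1, h2⟩
      exact ⟨h1, mem_iInter.2 fun x => by simpa using h2.dotProduct_mulVec_nonneg x⟩
    · rintro ⟨h1, h2⟩
      exact ⟨h1, (posSemidef_iff_real (isSymm_shift h1 _)).mpr fun x => mem_iInter.1 h2 x⟩
  rw [hset]
  refine (isClosed_eq continuous_transpose' continuous_id).inter (isClosed_iInter fun x => ?_)
  refine isClosed_le continuous_const ?_
  exact (continuous_quad x).comp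
    (continuous_id.add ((continuous_const.mul continuous_trace').smul continuous_const))

section
variable {p : ℝ}

lemma c_nonneg (hp1 : 1 ≤ p) (hpn : p < (n : ℝ)) : 0 ≤ (p - 1) / ((n : ℝ) - p) :=
  div_nonneg (by linarith) (by linarith)

lemma c_mul_np (hpn : p < (n : ℝ)) : ((p - 1) / ((n : ℝ) - p)) * ((n : ℝ) - p) = p - 1 :=
  div_mul_cancel₀ _ (by linarith)

lemma plargest_pos (hp1 : 1 ≤ p) (hpn : p < (n : ℝ)) {A : Matrix (Fin n) (Fin n) ℝ} (hA : A ∈ Plargest n p)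
    {P : Matrix (Fin n) (Fin n) ℝ} (hP : P.PosSemidef) : A + P ∈ Plargest n p := by
  obtain ⟨h1, h2⟩ := hA
  refine ⟨by rw [Matrix.IsSymm, Matrix.transpose_add, h1.eq, (_root_.isHermitian_iff_isSymm.mp hP.1).eq], ?_⟩
  have heq : (A + P) + (((p - 1) / ((n : ℝ) - p)) * (A + P).trace) • (1 : Matrix (Fin n) (Fin n) ℝ)
      = (A + (((p - 1) / ((n : ℝ) - p)) * A.trace) • (1 : Matrix (Fin n) (Fin n) ℝ))
        + (P + (((p - 1) / ((n : ℝ) - p)) * P.trace) • (1 : Matrix (Fin n) (Fin n) ℝ)) := by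
    rw [Matrix.trace_add]; rw [mul_add, add_smul]; abel
  rw [heq]
  exact h2.add (hP.add (psd_smul (mul_nonneg (c_nonneg hp1 hpn) (psd_trace_nonneg hP)) psd_one))

lemma plargest_smul {A : Matrix (Fin n) (Fin n) ℝ} (hA : A ∈ Plargest n p)
    {t : ℝ} (ht : 0 ≤ t) : t • A ∈ Plargest n p := by
  obtain ⟨h1, h2⟩ := hA
  refine ⟨by rw [Matrix.IsSymm, Matrix.transpose_smul, h1.eq], ?_⟩
  have heq : t • A + (((p - 1) / ((n : ℝ) - p)) * (t • A).trace) • (1 : Matrix (Fin n) (Fin n) ℝ)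
      = t • (A + (((p - 1) / ((n : ℝ) - p)) * A.trace) • (1 : Matrix (Fin n) (Fin n) ℝ)) := by
    rw [Matrix.trace_smul, smul_add, smul_smul, smul_eq_mul]; ring_nf
  rw [heq]
  exact psd_smul ht h2

lemma plargest_convex : Convex ℝ (Plargest n p) := by
  intro A hA B hB a b ha hb _
  obtain ⟨hA1, hA2⟩ := hA
  obtain ⟨hB1, hB2⟩ := hB
  refine ⟨by rw [Matrix.IsSymm, Matrix.transpose_add, Matrix.transpose_smul,
    Matrix.transpose_smul, hA1.eq, hB1.eq], ?_⟩
  have heq : a • A + b • B + (((p - 1) / ((n : ℝ) - p)) * (a • A + b • B).trace) •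
        (1 : Matrix (Fin n) (Fin n) ℝ)
      = a • (A + (((p - 1) / ((n : ℝ) - p)) * A.trace) • (1 : Matrix (Fin n) (Fin n) ℝ))
        + b • (B + (((p - 1) / ((n : ℝ) - p)) * B.trace) • (1 : Matrix (Fin n) (Fin n) ℝ)) := by
    rw [Matrix.trace_add, Matrix.trace_smul, Matrix.trace_smul]
    simp only [smul_add, smul_smul, smul_eq_mul, mul_add, add_smul]
    ring_nf
    abel
  rw [heq]
  exact (psd_smul ha hA2).add (psd_smul hb hB2)


lemma plargest_conj {g A : Matrix (Fin n) (Fin n) ℝ}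
    (hg : g ∈ Matrix.orthogonalGroup (Fin n) ℝ) (hA : A ∈ Plargest n p) :
    gᵀ * A * g ∈ Plargest n p := by
  obtain ⟨h1, h2⟩ := hA
  have hsg : star g = gᵀ := by
    rw [Matrix.star_eq_conjTranspose, Matrix.conjTranspose_eq_transpose_of_trivial]
  have hg1 : gᵀ * g = 1 := by
    have := Matrix.mem_unitaryGroup_iff'.mp hg; rwa [hsg] at this
  have hg2 : g * gᵀ = 1 := by
    have := Matrix.mem_unitaryGroup_iff.mp hg; rwa [hsg] at this
  refine ⟨?_, ?_⟩
  · rw [Matrix.IsSymm, Matrix.transpose_mul, Matrix.transpose_mul, Matrix.transpose_transpose,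
      h1.eq, mul_assoc]
  · have htr : (gᵀ * A * g).trace = A.trace := by
      rw [Matrix.trace_mul_comm, ← mul_assoc, hg2, one_mul]
    rw [htr]
    have heq : gᵀ * A * g + (((p - 1) / ((n : ℝ) - p)) * A.trace) • (1 : Matrix (Fin n) (Fin n) ℝ)
        = gᴴ * (A + (((p - 1) / ((n : ℝ) - p)) * A.trace) • (1 : Matrix (Fin n) (Fin n) ℝ)) * g := by
      rw [Matrix.conjTranspose_eq_transpose_of_trivial, Matrix.mul_add, Matrix.add_mul,
        Matrix.mul_smul, Matrix.smul_mul, mul_one, hg1]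
    rw [heq]
    exact h2.conjTranspose_mul_mul_same g

lemma edge_mem (hp1 : 1 ≤ p) (hpn : p < (n : ℝ)) {e : EucSp n} (he : ‖e‖ = 1) :
    ((1 : Matrix (Fin n) (Fin n) ℝ) - projMat e) - (p - 1) • projMat e ∈ Plargest n p := by
  have hsym : (((1 : Matrix (Fin n) (Fin n) ℝ) - projMat e) - (p - 1) • projMat e).IsSymm := by
    rw [Matrix.IsSymm, Matrix.transpose_sub, Matrix.transpose_sub, Matrix.transpose_one,
      Matrix.transpose_smul, (isSymm_proj e).eq]
  have htr : (((1 : Matrix (Fin n) (Fin n) ℝ) - projMat e) - (p - 1) • projMat e).trace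
      = (n : ℝ) - p := by
    rw [Matrix.trace_sub, Matrix.trace_sub, Matrix.trace_smul, Matrix.trace_one, trace_proj he]
    simp [Fintype.card_fin]; try ring
  refine ⟨hsym, ?_⟩
  rw [htr, c_mul_np hpn]
  rw [posSemidef_iff_real (by
    rw [Matrix.IsSymm, Matrix.transpose_add, hsym.eq, Matrix.transpose_smul, Matrix.transpose_one])]
  intro x
  rw [quad_add, quad_sub, quad_sub, quad_smul, quad_smul, quad_one, quad_proj]
  have hcs := Finset.sum_mul_sq_le_sq_mul_sq Finset.univ (fun i => e i) (fun i => x i)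
  rw [sum_sq_eq_one he, one_mul] at hcs
  nlinarith [hcs, sq_nonneg (∑ i, e i * x i)]

lemma edge_not_int (hp1 : 1 ≤ p) (hpn : p < (n : ℝ)) {e : EucSp n} (he : ‖e‖ = 1) :
    ((1 : Matrix (Fin n) (Fin n) ℝ) - projMat e) - (p - 1) • projMat e
      ∉ symInterior (Plargest n p) := by
  set E := ((1 : Matrix (Fin n) (Fin n) ℝ) - projMat e) - (p - 1) • projMat e with hE
  rintro ⟨U, hU, hprop⟩
  set γ : ℝ → Matrix (Fin n) (Fin n) ℝ := fun t => E - t • projMat e with hγ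
  have hγc : Continuous γ := continuous_const.sub (continuous_id.smul continuous_const)
  have hγ0 : γ 0 = E := by simp [hγ]
  have hpre : γ ⁻¹' U ∈ 𝓝 (0 : ℝ) := hγc.continuousAt.preimage_mem_nhds (hγ0 ▸ hU)
  have hmem : γ ⁻¹' U ∩ Ioi 0 ∈ 𝓝[>] (0 : ℝ) :=
    inter_mem (nhdsWithin_le_nhds hpre) self_mem_nhdsWithin
  obtain ⟨t, htU, ht0⟩ := Filter.nonempty_of_mem hmem
  have ht0' : (0 : ℝ) < t := ht0
  have hBsym : (γ t).IsSymm := by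
    rw [Matrix.IsSymm, hγ]
    simp only [Matrix.transpose_sub, Matrix.transpose_smul, (isSymm_proj e).eq,
      Matrix.transpose_one, hE]
  have hB : γ t ∈ Plargest n p := hprop _ htU hBsym
  have htrE : E.trace = (n : ℝ) - p := by
    rw [hE, Matrix.trace_sub, Matrix.trace_sub, Matrix.trace_smul, Matrix.trace_one, trace_proj he]
    simp [Fintype.card_fin]; try ring
  have htrB : (γ t).trace = ((n : ℝ) - p) - t := by
    rw [hγ]; simp only [Matrix.trace_sub, Matrix.trace_smul, trace_proj he, htrE, smul_eq_mul,
      mul_one]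
  have hq := hB.2.dotProduct_mulVec_nonneg (fun i => e i)
  have hse : ∑ i, e i * e i = 1 := by
    have := sum_sq_eq_one he
    simpa [sq] using this
  rw [show (star fun i => e i) = fun i => e i from by
    funext i; simp] at hq
  rw [htrB] at hq
  simp only [hγ, hE] at hq
  rw [quad_add, quad_sub, quad_sub, quad_sub, quad_smul, quad_smul, quad_smul, quad_one,
    quad_proj] at hq
  rw [hse] at hq
  rw [show (∑ i, e i ^ 2) = 1 from sum_sq_eq_one he] at hq
  have hc1 : ((p - 1) / ((n : ℝ) - p)) * (((n : ℝ) - p) - t)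
      = (p - 1) - ((p - 1) / ((n : ℝ) - p)) * t := by
    rw [mul_sub, c_mul_np hpn]
  rw [hc1] at hq
  have hcn := c_nonneg hp1 hpn
  nlinarith [mul_nonneg hcn ht0'.le]

def permM (σ : Equiv.Perm (Fin n)) : Matrix (Fin n) (Fin n) ℝ :=
  σ.toPEquiv.toMatrix

lemma permM_transpose (σ : Equiv.Perm (Fin n)) :
    (permM σ)ᵀ = permM σ.symm := by
  rw [permM, permM, Equiv.toPEquiv_symm, PEquiv.toMatrix_symm]

lemma permM_mem (σ : Equiv.Perm (Fin n)) :
    permM σ ∈ Matrix.orthogonalGroup (Fin n) ℝ := by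
  rw [Matrix.mem_unitaryGroup_iff]
  have hstar : star (permM σ) = (permM σ)ᵀ := by
    rw [Matrix.star_eq_conjTranspose, Matrix.conjTranspose_eq_transpose_of_trivial]
  rw [hstar, permM_transpose, permM, permM, ← PEquiv.toMatrix_trans, ← Equiv.toPEquiv_trans,
    Equiv.self_trans_symm, Equiv.toPEquiv_refl, PEquiv.toMatrix_refl]

lemma permM_conj (σ : Equiv.Perm (Fin n)) (d : Fin n → ℝ) :
    (permM σ)ᵀ * Matrix.diagonal d * permM σ = Matrix.diagonal (d ∘ σ.symm) := by
  rw [permM_transpose, permM, permM, PEquiv.toMatrix_toPEquiv_mul, PEquiv.mul_toMatrix_toPEquiv]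
  ext a b
  simp only [Matrix.submatrix_apply, id, Matrix.diagonal_apply, Function.comp_apply,
    (Equiv.injective _).eq_iff]

lemma exists_diag (A : Matrix (Fin n) (Fin n) ℝ) (hA : A.IsSymm) :
    ∃ (g : Matrix (Fin n) (Fin n) ℝ) (d : Fin n → ℝ),
      g ∈ Matrix.orthogonalGroup (Fin n) ℝ ∧ gᵀ * A * g = Matrix.diagonal d ∧
      A.trace = ∑ i, d i ∧
      ∀ s : ℝ, (∀ i, 0 ≤ d i + s) → (A + s • (1 : Matrix (Fin n) (Fin n) ℝ)).PosSemidef := by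
  have h := _root_.isHermitian_iff_isSymm.mpr hA
  set g : Matrix (Fin n) (Fin n) ℝ := (h.eigenvectorUnitary : Matrix (Fin n) (Fin n) ℝ) with hgdef
  set d : Fin n → ℝ := h.eigenvalues with hddef
  have hg : g ∈ Matrix.orthogonalGroup (Fin n) ℝ := h.eigenvectorUnitary.2
  have hsg : star g = gᵀ := by
    rw [Matrix.star_eq_conjTranspose, Matrix.conjTranspose_eq_transpose_of_trivial]
  have hgg : star g * g = 1 := Matrix.mem_unitaryGroup_iff'.mp hg
  have hgg' : g * star g = 1 := Matrix.mem_unitaryGroup_iff.mp hg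
  have hdiag : star g * A * g = Matrix.diagonal d := by
    have := h.conjStarAlgAut_star_eigenvectorUnitary
    simpa [Unitary.conjStarAlgAut_apply, RCLike.ofReal_real_eq_id] using this
  have hspec : A = g * Matrix.diagonal d * star g := by
    have := h.spectral_theorem
    simpa [Unitary.conjStarAlgAut_apply, RCLike.ofReal_real_eq_id] using this
  refine ⟨g, d, hg, by rw [← hsg]; exact hdiag, ?_, ?_⟩
  · conv_lhs => rw [hspec]
    rw [Matrix.trace_mul_comm, ← mul_assoc, hgg, one_mul, Matrix.trace_diagonal]
  · intro s hs
    have key : A + s • (1 : Matrix (Fin n) (Fin n) ℝ)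
        = g * Matrix.diagonal (fun i => d i + s) * gᴴ := by
      have h1 : (Matrix.diagonal (fun i => d i + s) : Matrix (Fin n) (Fin n) ℝ)
          = Matrix.diagonal d + s • (1 : Matrix (Fin n) (Fin n) ℝ) := by
        rw [← Matrix.diagonal_one, ← Matrix.diagonal_smul, Matrix.diagonal_add]
        simp [smul_eq_mul]
      rw [h1, Matrix.mul_add, Matrix.add_mul, Matrix.conjTranspose_eq_transpose_of_trivial,
        ← hsg, ← hspec, Matrix.mul_smul, Matrix.smul_mul, mul_one, hgg']
    rw [key]
    exact (Matrix.posSemidef_diagonal_iff.mpr fun i => hs i).mul_mul_conjTranspose_same g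

lemma edge_diag (m : ℕ) (p : ℝ) :
    ((1 : Matrix (Fin (m+2)) (Fin (m+2)) ℝ) - projMat (EuclideanSpace.single 0 1))
      - (p - 1) • projMat (EuclideanSpace.single (0 : Fin (m+2)) (1:ℝ))
      = Matrix.diagonal (fun j => if j = 0 then 1 - p else 1) := by
  ext i j
  have hs : ∀ k : Fin (m+2), (EuclideanSpace.single (0 : Fin (m+2)) (1:ℝ)) k
      = if k = 0 then 1 else 0 := fun k => EuclideanSpace.single_apply 0 1 k
  by_cases hij : i = j
  · subst hij
    by_cases hi : i = 0 <;>
      simp [Matrix.sub_apply, Matrix.smul_apply, Matrix.one_apply, Matrix.diagonal_apply,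
        projMat, hs, hi] <;> ring
  · by_cases hi : i = 0 <;> by_cases hj : j = 0 <;>
      simp_all [Matrix.sub_apply, Matrix.smul_apply, Matrix.one_apply, Matrix.diagonal_apply,
        projMat, hs]

theorem part2 {n : ℕ} (hn : 2 ≤ n) {p : ℝ} (hp1 : 1 ≤ p) (hpn : p < (n : ℝ))
    (F : Set (Matrix (Fin n) (Fin n) ℝ)) (hF : IsConeSubequation F) (hconv : Convex ℝ F)
    (hinv : ∀ g ∈ Matrix.orthogonalGroup (Fin n) ℝ, ∀ A ∈ F, gᵀ * A * g ∈ F)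
    (hRC : HasRieszChar F p) : F ⊆ Plargest n p := by
  obtain ⟨⟨hFsym, hFclosed, hFpos⟩, hFscale⟩ := hF
  obtain ⟨m, rfl⟩ : ∃ m, n = m + 2 := ⟨n - 2, by omega⟩
  -- the distinguished unit vector
  set e₀ : EucSp (m + 2) := EuclideanSpace.single (0 : Fin (m + 2)) (1 : ℝ) with he₀def
  have he₀ : ‖e₀‖ = 1 := by rw [he₀def, EuclideanSpace.norm_single, norm_one]
  have hEfr := hRC.2 e₀ he₀
  set E : Matrix (Fin (m + 2)) (Fin (m + 2)) ℝ :=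
    ((1 : Matrix (Fin (m + 2)) (Fin (m + 2)) ℝ) - projMat e₀) - (p - 1) • projMat e₀ with hEdef
  have hEF : E ∈ F := by
    have := hEfr.1
    rwa [hFclosed.closure_eq] at this
  have hEdiag : E = Matrix.diagonal (fun j : Fin (m + 2) => if j = 0 then 1 - p else 1) := by
    rw [hEdef, he₀def]
    exact edge_diag m p
  have hadd : ∀ A ∈ F, ∀ B ∈ F, A + B ∈ F := by
    intro A hA B hB
    have h2 := hconv hA hB (by norm_num : (0:ℝ) ≤ 1/2) (by norm_num : (0:ℝ) ≤ 1/2) (by norm_num)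
    have h3 := hFscale _ h2 2 (by norm_num)
    rw [smul_add, smul_smul, smul_smul] at h3
    norm_num at h3
    exact h3
  have hzero : (0 : Matrix (Fin (m + 2)) (Fin (m + 2)) ℝ) ∈ F := by
    have := hFscale _ hEF 0 le_rfl
    simpa using this
  -- diagonal membership predicate
  set DF : (Fin (m + 2) → ℝ) → Prop := fun d => Matrix.diagonal d ∈ F with hDFdef
  have DF_perm : ∀ d, DF d → ∀ σ : Equiv.Perm (Fin (m + 2)), DF (d ∘ σ) := by
    intro d hd σ
    have h1 := hinv _ (permM_mem σ.symm) _ hd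
    rw [permM_conj σ.symm d] at h1
    simpa using h1
  have DF_mono : ∀ d d' : Fin (m + 2) → ℝ, DF d → (∀ j, d j ≤ d' j) → DF d' := by
    intro d d' hd hle
    have hP : (Matrix.diagonal (fun j => d' j - d j)).PosSemidef :=
      Matrix.posSemidef_diagonal_iff.mpr fun i => by linarith [hle i]
    have h1 := hFpos _ hd _ hP
    rw [Matrix.diagonal_add] at h1
    simpa using h1
  have DF_smul : ∀ d, DF d → ∀ t : ℝ, 0 ≤ t → DF (fun j => t * d j) := by
    intro d hd t ht
    have h1 := hFscale _ hd t ht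
    rw [← Matrix.diagonal_smul] at h1
    exact h1
  have DF_add : ∀ d d', DF d → DF d' → DF (fun j => d j + d' j) := by
    intro d d' hd hd'
    have h1 := hadd _ hd _ hd'
    rw [Matrix.diagonal_add] at h1
    exact h1
  -- the two-parameter slice
  set Sm : ℝ → ℝ → Prop := fun l mu => DF (fun j => if j = 0 then l else mu) with hSmdef
  have Sbase : Sm (1 - p) 1 := by
    rw [hSmdef]
    show Matrix.diagonal _ ∈ F
    rw [← hEdiag]
    exact hEF
  have Skey : ∀ d : Fin (m+2) → ℝ, DF d → ∀ i : Fin (m+2),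
      Sm ((m+1 : ℝ) * d i) ((∑ j, d j) - d i) := by
    intro d hd i
    set τ : Equiv.Perm (Fin (m+2)) := Equiv.swap i 0 with hτ
    have hd' : DF (d ∘ τ) := DF_perm d hd τ
    set d' : Fin (m+2) → ℝ := d ∘ τ with hd'def
    have hd'0 : d' 0 = d i := by
      rw [hd'def]; simp [hτ, Equiv.swap_apply_right]
    have hsumd' : ∑ j, d' j = ∑ j, d j := Equiv.sum_comp τ d
    set π : Fin (m+1) → Equiv.Perm (Fin (m+2)) :=
      fun k => Equiv.Perm.decomposeFin.symm (0, (finRotate (m+1)) ^ (k : ℕ)) with hπ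
    have hπ0 : ∀ k, (π k) 0 = 0 := fun k => Equiv.Perm.decomposeFin_symm_apply_zero _ _
    have hπs : ∀ (k : Fin (m+1)) (j : Fin (m+1)),
        (π k) j.succ = (((finRotate (m+1)) ^ (k : ℕ)) j).succ := by
      intro k j
      rw [hπ, Equiv.Perm.decomposeFin_symm_apply_succ]
      simp
    open Fin.NatCast in
    have hrot : ∀ (k : ℕ) (j : Fin (m+1)), ((finRotate (m+1)) ^ k) j = j + (k : Fin (m+1)) := by
      intro k
      induction k with
      | zero => intro j; simp
      | succ k ih =>
          intro j
          rw [pow_succ', Equiv.Perm.mul_apply, finRotate_succ_apply, ih]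
          push_cast
          rw [add_assoc]
    have hBmem : (∑ k : Fin (m+1), Matrix.diagonal (d' ∘ (π k))) ∈ F := by
      refine Finset.sum_induction _ (· ∈ F) (fun a b ha hb => hadd a ha b hb) hzero ?_
      intro k _
      exact DF_perm d' hd' (π k)
    have hBdiag : (∑ k : Fin (m+1), Matrix.diagonal (d' ∘ (π k)))
        = Matrix.diagonal (fun j => ∑ k : Fin (m+1), d' ((π k) j)) := by
      ext a b
      by_cases hab : a = b
      · subst hab
        simp [Matrix.sum_apply, Matrix.diagonal_apply_eq]
      · simp [Matrix.sum_apply, Matrix.diagonal_apply_ne _ hab]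
    have hval : (fun j => ∑ k : Fin (m+1), d' ((π k) j))
        = fun j : Fin (m+2) => if j = 0 then (m+1 : ℝ) * d i else (∑ j, d j) - d i := by
      funext j
      refine Fin.cases ?_ ?_ j
      · rw [if_pos rfl]
        have : ∀ k : Fin (m+1), d' ((π k) 0) = d i := fun k => by rw [hπ0, hd'0]
        rw [Finset.sum_congr rfl fun k _ => this k, Finset.sum_const, Finset.card_univ,
          Fintype.card_fin]
        simp [nsmul_eq_mul]
      · intro l
        rw [if_neg (Fin.succ_ne_zero l)]
        calc ∑ k : Fin (m+1), d' ((π k) l.succ) = ∑ k : Fin (m+1), d' ((l + k).succ) := by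
              refine Finset.sum_congr rfl fun k _ => ?_
              rw [hπs, hrot, Fin.cast_val_eq_self]
          _ = ∑ k : Fin (m+1), d' k.succ := by
              refine Fintype.sum_equiv (Equiv.addLeft l) _ _ fun k => ?_
              rfl
          _ = (∑ j, d' j) - d' 0 := by
              have hj : ∑ j, d' j = d' 0 + ∑ k : Fin (m+1), d' k.succ := Fin.sum_univ_succ d'
              rw [hj]; ring
          _ = (∑ j, d j) - d i := by rw [hsumd', hd'0]
    show Matrix.diagonal _ ∈ F
    rw [← hval, ← hBdiag]
    exact hBmem
  have Sfinal : ∀ l : ℝ, Sm l 1 → 1 - p ≤ l := by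
    intro l hl
    by_contra hlt
    push_neg at hlt
    set ε : ℝ := min 1 ((1 - p - l) / (1 + |1 - l|)) with hε
    have hpl : 0 < 1 - p - l := by linarith
    have habs : (0:ℝ) < 1 + |1 - l| := by positivity
    have hε0 : 0 < ε := lt_min one_pos (div_pos hpl habs)
    have hε1 : ε ≤ 1 := min_le_left _ _
    have hεle : ε * (1 - l) ≤ 1 - p - l := by
      have h2 : ε ≤ (1 - p - l) / (1 + |1 - l|) := min_le_right _ _
      have h3 : 1 - l ≤ |1 - l| := le_abs_self _
      have h4 : 0 ≤ |1 - l| := abs_nonneg _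
      have h5 : ε * (1 - l) ≤ ε * |1 - l| := by nlinarith
      have h6 : ε * |1 - l| ≤ ((1 - p - l) / (1 + |1 - l|)) * |1 - l| :=
        mul_le_mul_of_nonneg_right h2 h4
      have h7 : ((1 - p - l) / (1 + |1 - l|)) * |1 - l| ≤ 1 - p - l := by
        rw [div_mul_eq_mul_div, div_le_iff₀ habs]
        nlinarith
      linarith
    have h1 : DF (fun j => (1 - ε) * (if j = 0 then l else 1)) :=
      DF_smul _ hl (1 - ε) (by linarith)
    have h2 : DF (fun j : Fin (m+2) => (if j = 0 then 1 - p else 1) - ε) := by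
      refine DF_mono _ _ h1 fun j => ?_
      by_cases hj : j = 0 <;> simp [hj] <;> nlinarith
    have hmemE : E - ε • (1 : Matrix (Fin (m+2)) (Fin (m+2)) ℝ) ∈ F := by
      have hid : E - ε • (1 : Matrix (Fin (m+2)) (Fin (m+2)) ℝ)
          = Matrix.diagonal (fun j : Fin (m+2) => (if j = 0 then 1 - p else 1) - ε) := by
        rw [hEdiag]
        ext a b
        by_cases hab : a = b
        · subst hab
          by_cases h0 : a = 0 <;>
            simp [Matrix.sub_apply, Matrix.smul_apply, Matrix.one_apply,
              Matrix.diagonal_apply_eq, h0]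
        · simp [Matrix.sub_apply, Matrix.smul_apply, Matrix.one_apply, hab,
            Matrix.diagonal_apply_ne _ hab]
      rw [hid]; exact h2
    set δ : ℝ := ε / (m + 3) with hδ
    have hδ0 : 0 < δ := by positivity
    set U : Set (Matrix (Fin (m+2)) (Fin (m+2)) ℝ) :=
      {B | ∀ i j, |B i j - E i j| < δ} with hU
    have hUopen : IsOpen U := by
      have hUeq : U = ⋂ i, ⋂ j,
          {B : Matrix (Fin (m+2)) (Fin (m+2)) ℝ | |B i j - E i j| < δ} := by
        ext B; simp [hU, mem_iInter]
      rw [hUeq]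
      refine isOpen_iInter_of_finite fun i => isOpen_iInter_of_finite fun j => ?_
      exact isOpen_lt (Continuous.abs ((continuous_entry i j).sub continuous_const))
        continuous_const
    have hEU : E ∈ U := by
      intro i j; simpa using hδ0
    refine hEfr.2 ⟨U, hUopen.mem_nhds hEU, ?_⟩
    intro B hB hBsym
    have hEsym : E.IsSymm := by rw [hEdiag]; exact Matrix.isSymm_diagonal _
    have hRsym : (B - E + ε • (1 : Matrix (Fin (m+2)) (Fin (m+2)) ℝ)).IsSymm := by
      rw [Matrix.IsSymm, Matrix.transpose_add, Matrix.transpose_sub, hBsym.eq, hEsym.eq,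
        Matrix.transpose_smul, Matrix.transpose_one]
    have hRpsd : (B - E + ε • (1 : Matrix (Fin (m+2)) (Fin (m+2)) ℝ)).PosSemidef := by
      rw [posSemidef_iff_real hRsym]
      intro x
      rw [quad_add, quad_smul, quad_one]
      have hb : ∀ i j, |(B - E) i j| ≤ δ := fun i j => by
        rw [Matrix.sub_apply]; exact (hB i j).le
      have hbound : |dotProduct x ((B - E) *ᵥ x)|
          ≤ δ * ((∑ i, |x i|) * (∑ i, |x i|)) := by
        rw [dotProduct_expand]
        calc |∑ i, ∑ j, x i * (B - E) i j * x j|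
            ≤ ∑ i, |∑ j, x i * (B - E) i j * x j| := Finset.abs_sum_le_sum_abs _ _
          _ ≤ ∑ i, ∑ j, |x i * (B - E) i j * x j| :=
              Finset.sum_le_sum fun i _ => Finset.abs_sum_le_sum_abs _ _
          _ ≤ ∑ i, ∑ j, |x i| * δ * |x j| := by
              refine Finset.sum_le_sum fun i _ => Finset.sum_le_sum fun j _ => ?_
              rw [abs_mul, abs_mul]
              exact mul_le_mul_of_nonneg_right
                (mul_le_mul_of_nonneg_left (hb i j) (abs_nonneg _)) (abs_nonneg _)
          _ = δ * ((∑ i, |x i|) * (∑ i, |x i|)) := by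
              rw [Finset.sum_mul_sum, Finset.mul_sum]
              refine Finset.sum_congr rfl fun i _ => ?_
              rw [Finset.mul_sum]
              exact Finset.sum_congr rfl fun j _ => by ring
      have hTsq : (∑ i, |x i|) * (∑ i, |x i|) ≤ ((m : ℝ) + 2) * ∑ i, x i ^ 2 := by
        have h8 := sq_sum_le_card_mul_sum_sq (s := (Finset.univ : Finset (Fin (m+2))))
          (f := fun i => |x i|)
        simp only [sq_abs, Finset.card_univ, Fintype.card_fin] at h8
        rw [sq] at h8
        push_cast at h8
        linarith
      have h0 : (0:ℝ) ≤ ∑ i, x i ^ 2 := by positivity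
      have hδm : δ * ((m : ℝ) + 2) ≤ ε := by
        rw [hδ, div_mul_eq_mul_div, div_le_iff₀ (by positivity : (0:ℝ) < (m:ℝ) + 3)]
        nlinarith
      have c1 : -(δ * ((∑ i, |x i|) * (∑ i, |x i|)))
          ≤ dotProduct x ((B - E) *ᵥ x) := by
        linarith [neg_abs_le (dotProduct x ((B - E) *ᵥ x)), hbound]
      have c2 : δ * ((∑ i, |x i|) * (∑ i, |x i|)) ≤ δ * (((m : ℝ) + 2) * ∑ i, x i ^ 2) :=
        mul_le_mul_of_nonneg_left hTsq hδ0.le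
      have c3 : δ * (((m : ℝ) + 2) * ∑ i, x i ^ 2) ≤ ε * ∑ i, x i ^ 2 := by
        have hre : δ * (((m : ℝ) + 2) * ∑ i, x i ^ 2) = (δ * ((m : ℝ) + 2)) * ∑ i, x i ^ 2 := by
          ring
        rw [hre]
        exact mul_le_mul_of_nonneg_right hδm h0
      linarith
    have hBrepr : B = (E - ε • (1 : Matrix (Fin (m+2)) (Fin (m+2)) ℝ))
        + (B - E + ε • (1 : Matrix (Fin (m+2)) (Fin (m+2)) ℝ)) := by abel
    rw [hBrepr]
    exact hFpos _ hmemE _ hRpsd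
  have key : ∀ d, DF d → ∀ i : Fin (m+2),
      0 ≤ d i + ((p - 1) / (((m+2:ℕ) : ℝ) - p)) * (∑ j, d j) := by
    intro d hd i
    by_contra hcon
    push_neg at hcon
    have hcnp : ((p - 1) / (((m+2:ℕ):ℝ) - p)) * ((((m+2:ℕ)):ℝ) - p) = p - 1 := c_mul_np hpn
    have hN : ((m+2:ℕ):ℝ) = (m:ℝ) + 2 := by push_cast; ring
    rw [hN] at hcnp hcon
    set c : ℝ := (p - 1) / (((m:ℝ) + 2) - p) with hc
    set lam : ℝ := (m+1 : ℝ) * d i with hlam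
    set mu : ℝ := (∑ j, d j) - d i with hmu
    have hSlm : Sm lam mu := Skey d hd i
    have hNp : 0 < ((m:ℝ) + 2) - p := by
      have := hpn; rw [hN] at this; linarith
    have hlin : lam + (p - 1) * mu < 0 := by
      have hid : lam + (p - 1) * mu
          = (((m:ℝ) + 2) - p) * (d i + c * (∑ j, d j)) := by
        rw [hlam, hmu]
        linear_combination (-(∑ j, d j)) * hcnp
      rw [hid]
      exact mul_neg_of_pos_of_neg hNp hcon
    set s : ℝ := 1 / (1 + |mu|) with hs
    have hs0 : 0 < s := by positivity
    have hsmu : 0 < 1 + s * mu := by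
      have h1 : |s * mu| = |mu| / (1 + |mu|) := by
        rw [abs_mul, abs_of_pos hs0, hs]; ring
      have h2 : |mu| / (1 + |mu|) < 1 := by
        rw [div_lt_one (by positivity)]; linarith [abs_nonneg mu]
      have h3 := neg_abs_le (s * mu)
      linarith [h1 ▸ h3, h1 ▸ h2]
    have hSm1 : Sm (s * lam) (s * mu) := by
      show DF _
      have heq : (fun j : Fin (m+2) => if j = 0 then s * lam else s * mu)
          = fun j => s * (if j = 0 then lam else mu) := by
        funext j; by_cases hj : j = 0 <;> simp [hj]
      rw [heq]
      exact DF_smul _ hSlm s hs0.le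
    have hSadd : Sm (1 - p + s * lam) (1 + s * mu) := by
      show DF _
      have heq : (fun j : Fin (m+2) => if j = 0 then 1 - p + s * lam else 1 + s * mu)
          = fun j => (if j = 0 then 1 - p else 1) + (if j = 0 then s * lam else s * mu) := by
        funext j; by_cases hj : j = 0 <;> simp [hj]
      rw [heq]
      exact DF_add _ _ Sbase hSm1
    set r : ℝ := 1 / (1 + s * mu) with hr
    have hr0 : 0 < r := by positivity
    have hSr : Sm (r * (1 - p + s * lam)) (r * (1 + s * mu)) := by
      show DF _
      have heq : (fun j : Fin (m+2) => if j = 0 then r * (1 - p + s * lam)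
            else r * (1 + s * mu))
          = fun j => r * (if j = 0 then 1 - p + s * lam else 1 + s * mu) := by
        funext j; by_cases hj : j = 0 <;> simp [hj]
      rw [heq]
      exact DF_smul _ hSadd r hr0.le
    have hr1 : r * (1 + s * mu) = 1 := by
      rw [hr]; field_simp
    rw [hr1] at hSr
    have hfin := Sfinal _ hSr
    have hlt2 : r * (1 - p + s * lam) < 1 - p := by
      have h2 : (1 - p + s * lam) < (1 - p) * (1 + s * mu) := by
        have hq : (1 - p + s * lam) - (1 - p) * (1 + s * mu) = s * (lam + (p - 1) * mu) := by
          ring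
        have hneg : s * (lam + (p - 1) * mu) < 0 := mul_neg_of_pos_of_neg hs0 hlin
        linarith
      have h3 := mul_lt_mul_of_pos_left h2 hr0
      rw [show r * ((1 - p) * (1 + s * mu)) = (1 - p) * (r * (1 + s * mu)) by ring, hr1,
        mul_one] at h3
      exact h3
    linarith
  intro A hA
  have hAs := hFsym A hA
  obtain ⟨g, d, hg, hgA, htr, hpsd⟩ := exists_diag A hAs
  have hdF : DF d := by
    have := hinv g hg A hA
    rwa [hgA] at this
  refine ⟨hAs, ?_⟩
  rw [htr]
  refine hpsd _ fun i => ?_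
  have hk := key d hdF i
  linarith

end
end AuxLemmas

/-- `𝒫_p^{largest}` is an O(n)-invariant convex cone subequation of Riesz characteristic
`p`, and it contains every O(n)-invariant convex cone subequation of Riesz
characteristic `p`. -/
theorem stmt14 (n : ℕ) (hn : 2 ≤ n) (p : ℝ) (hp1 : 1 ≤ p) (hpn : p < (n : ℝ)) :
    (IsConeSubequation (Plargest n p) ∧ Convex ℝ (Plargest n p) ∧
      (∀ g ∈ Matrix.orthogonalGroup (Fin n) ℝ, ∀ A ∈ Plargest n p,
        gᵀ * A * g ∈ Plargest n p) ∧
      HasRieszChar (Plargest n p) p) ∧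
    (∀ F : Set (Matrix (Fin n) (Fin n) ℝ),
      IsConeSubequation F → Convex ℝ F →
      (∀ g ∈ Matrix.orthogonalGroup (Fin n) ℝ, ∀ A ∈ F, gᵀ * A * g ∈ F) →
      HasRieszChar F p → F ⊆ Plargest n p) := by
  constructor
  · refine ⟨⟨⟨fun A hA => hA.1, plargest_closed p, fun A hA P hP => plargest_pos hp1 hpn hA hP⟩,
      fun A hA t ht => plargest_smul hA ht⟩, plargest_convex,
      fun g hg A hA => plargest_conj hg hA,
      ⟨hp1, fun e he => ⟨subset_closure (edge_mem hp1 hpn he), edge_not_int hp1 hpn he⟩⟩⟩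
  · exact fun F hF hc hi hR => part2 hn hp1 hpn F hF hc hi hR

end
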